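/- For probability vectors p, q ∈ Prob(n), p majorizes q if and only if q can be obtained from p by a finite composition of T-transforms. -/

import Mathlib

/-- The sum of the `k` largest entries of `r`. -/
noncomputable def topSum {n : ℕ} (r : Fin n → ℝ) (k : ℕ) : ℝ :=
  sSup {x : ℝ | ∃ s : Finset (Fin n), s.card = k ∧ x = ∑ i ∈ s, r i}

/-- Majorization for probability vectors: the sum of the `k` largest entries of `p`
is at least that of `q` for every `k`, with equality at `k = n`. -/
def MajP {n : ℕ} (p q : Fin n → ℝ) : Prop :=
  (∀ k : ℕ, k ≤ n → topSum q k ≤ topSum p k) ∧ topSum p n = topSum q n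

/-- A probability vector in `ℝⁿ`. -/
def ProbVec {n : ℕ} (p : Fin n → ℝ) : Prop :=
  (∀ i, 0 ≤ p i) ∧ ∑ i, p i = 1

/-- The permutation matrix of the transposition swapping `i` and `j`. -/
def swapMat {n : ℕ} (i j : Fin n) : Matrix (Fin n) (Fin n) ℝ :=
  fun a b => if a = Equiv.swap i j b then 1 else 0

/-- A `T`-transform: `T = t I + (1-t) Π` with `t ∈ [0,1]` and `Π` a transposition
permutation matrix swapping exactly two coordinates. -/
def IsTTransform {n : ℕ} (T : Matrix (Fin n) (Fin n) ℝ) : Prop :=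
  ∃ t : ℝ, t ∈ Set.Icc (0 : ℝ) 1 ∧ ∃ i j : Fin n, i ≠ j ∧
    T = t • (1 : Matrix (Fin n) (Fin n) ℝ) + (1 - t) • swapMat i j

section API

variable {n : ℕ}

lemma topSum_bddAbove (r : Fin n → ℝ) (k : ℕ) :
    BddAbove {x : ℝ | ∃ s : Finset (Fin n), s.card = k ∧ x = ∑ i ∈ s, r i} := by
  have : {x : ℝ | ∃ s : Finset (Fin n), s.card = k ∧ x = ∑ i ∈ s, r i}
      = (fun s : Finset (Fin n) => ∑ i ∈ s, r i) '' {s | s.card = k} := by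
    ext x; simp [eq_comm]
  rw [this]
  exact (Set.toFinite _).image _ |>.bddAbove

lemma le_topSum (r : Fin n → ℝ) {k : ℕ} {s : Finset (Fin n)} (h : s.card = k) :
    ∑ i ∈ s, r i ≤ topSum r k :=
  le_csSup (topSum_bddAbove r k) ⟨s, h, rfl⟩

lemma topSum_le (r : Fin n → ℝ) {k : ℕ} (hk : k ≤ n) {c : ℝ}
    (h : ∀ s : Finset (Fin n), s.card = k → ∑ i ∈ s, r i ≤ c) : topSum r k ≤ c := by
  apply csSup_le
  · obtain ⟨t, -, ht⟩ := Finset.exists_subset_card_eq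
      (s := (Finset.univ : Finset (Fin n))) (by simpa using hk)
    exact ⟨∑ i ∈ t, r i, t, ht, rfl⟩
  · rintro x ⟨s, hs, rfl⟩; exact h s hs

lemma topSum_univ (r : Fin n → ℝ) : topSum r n = ∑ i, r i := by
  apply le_antisymm
  · apply topSum_le r le_rfl
    intro s hs
    have : s = Finset.univ := Finset.eq_univ_of_card s (by simpa using hs)
    simp [this]
  · exact le_topSum r (by simp)

/-- the prefix finset of the first `k` coordinates -/
def preFin (k : ℕ) : Finset (Fin n) := Finset.univ.filter (fun i => (i : ℕ) < k)

lemma mem_preFin {k : ℕ} {i : Fin n} : i ∈ preFin k ↔ (i : ℕ) < k := by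
  simp [preFin]

lemma card_preFin {k : ℕ} (hk : k ≤ n) : (preFin (n := n) k).card = k := by
  have : preFin (n := n) k = Finset.univ.map (Fin.castLEEmb hk) := by
    ext i
    simp only [mem_preFin, Finset.mem_map, Finset.mem_univ, true_and]
    constructor
    · intro h; exact ⟨⟨i, h⟩, rfl⟩
    · rintro ⟨j, rfl⟩; exact j.2
  simp [this]

lemma preFin_succ {m : ℕ} (hm : m < n) :
    preFin (n := n) (m + 1) = insert ⟨m, hm⟩ (preFin m) := by
  ext i
  simp only [mem_preFin, Finset.mem_insert]
  constructor
  · intro h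
    rcases Nat.lt_succ_iff_lt_or_eq.1 h with h | h
    · exact Or.inr h
    · exact Or.inl (Fin.ext h)
  · rintro (rfl | h)
    · simp
    · exact Nat.lt_succ_of_lt h

lemma sum_preFin_succ (r : Fin n → ℝ) {m : ℕ} (hm : m < n) :
    ∑ i ∈ preFin (m + 1), r i = ∑ i ∈ preFin m, r i + r ⟨m, hm⟩ := by
  rw [preFin_succ hm, Finset.sum_insert (by simp [mem_preFin])]
  ring

lemma exchange (r : Fin n → ℝ) (hs : ∀ i j : Fin n, i ≤ j → r j ≤ r i) (k : ℕ) :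
    ∀ m : ℕ, ∀ s : Finset (Fin n), (s \ preFin k).card = m →
      s.card = (preFin (n := n) k).card → ∑ i ∈ s, r i ≤ ∑ i ∈ preFin (n := n) k, r i := by
  intro m
  induction m using Nat.strong_induction_on with
  | _ m IH =>
    intro s hm hcard
    rcases Nat.eq_zero_or_pos m with h0 | hpos
    · subst h0
      have hsub : s ⊆ preFin k := by
        intro x hx
        by_contra hxn
        have : x ∈ s \ preFin k := Finset.mem_sdiff.2 ⟨hx, hxn⟩
        simp [Finset.card_eq_zero.1 hm] at this
      have : s = preFin k := Finset.eq_of_subset_of_card_le hsub (le_of_eq hcard.symm)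
      rw [this]
    · have hjex : (s \ preFin k).Nonempty := Finset.card_pos.1 (hm ▸ hpos)
      obtain ⟨j, hj⟩ := hjex
      have hj1 : j ∈ s := (Finset.mem_sdiff.1 hj).1
      have hj2 : ¬ (j : ℕ) < k := fun h => (Finset.mem_sdiff.1 hj).2 (mem_preFin.2 h)
      have hiex : (preFin (n := n) k \ s).Nonempty := by
        rw [← Finset.card_pos]
        have h1 := Finset.card_sdiff_add_card_inter s (preFin (n := n) k)
        have h2 := Finset.card_sdiff_add_card_inter (preFin (n := n) k) s
        rw [Finset.inter_comm] at h2
        omega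
      obtain ⟨i, hi⟩ := hiex
      have hi1 : i ∈ preFin k := (Finset.mem_sdiff.1 hi).1
      have hi2 : i ∉ s := (Finset.mem_sdiff.1 hi).2
      have hij : r j ≤ r i := hs i j (by
        have := mem_preFin.1 hi1; exact Fin.le_def.2 (by omega))
      set s' := insert i (s.erase j) with hs'
      have hins : i ∉ s.erase j := fun h => hi2 (Finset.mem_of_mem_erase h)
      have hcard' : s'.card = (preFin (n := n) k).card := by
        rw [hs', Finset.card_insert_of_notMem hins, Finset.card_erase_of_mem hj1]
        have : 0 < s.card := Finset.card_pos.2 ⟨j, hj1⟩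
        omega
      have hsd : s' \ preFin k = (s \ preFin k).erase j := by
        ext x
        simp only [hs', Finset.mem_sdiff, Finset.mem_insert, Finset.mem_erase]
        constructor
        · rintro ⟨hx1 | ⟨hx2, hx3⟩, hx4⟩
          · exact absurd hi1 (hx1 ▸ hx4)
          · exact ⟨hx2, hx3, hx4⟩
        · rintro ⟨hx1, hx2, hx3⟩
          exact ⟨Or.inr ⟨hx1, hx2⟩, hx3⟩
      have hmlt : (s' \ preFin k).card < m := by
        rw [hsd, Finset.card_erase_of_mem hj, hm]; omega
      have h1 : ∑ x ∈ s', r x ≤ ∑ x ∈ preFin (n := n) k, r x :=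
        IH _ hmlt s' rfl hcard'
      have h2 : ∑ x ∈ s, r x ≤ ∑ x ∈ s', r x := by
        rw [hs', Finset.sum_insert hins, ← Finset.add_sum_erase _ _ hj1]
        linarith
      linarith

lemma topSum_sorted (r : Fin n → ℝ) (hr : ∀ i j : Fin n, i ≤ j → r j ≤ r i)
    {k : ℕ} (hk : k ≤ n) : topSum r k = ∑ i ∈ preFin k, r i := by
  apply le_antisymm
  · apply topSum_le r hk
    intro s hs
    exact exchange r hr k (s \ preFin k).card s rfl (by rw [hs, card_preFin hk])
  · exact le_topSum r (card_preFin hk)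

lemma topSum_perm (r : Fin n → ℝ) (σ : Equiv.Perm (Fin n)) (k : ℕ) :
    topSum (fun i => r (σ i)) k = topSum r k := by
  unfold topSum
  congr 1
  ext x
  constructor
  · rintro ⟨s, hs, rfl⟩
    refine ⟨s.image σ, by rw [Finset.card_image_of_injective _ σ.injective, hs], ?_⟩
    rw [Finset.sum_image (fun a _ b _ h => σ.injective h)]
  · rintro ⟨s, hs, rfl⟩
    refine ⟨s.image σ.symm, by rw [Finset.card_image_of_injective _ σ.symm.injective, hs], ?_⟩
    rw [Finset.sum_image (fun a _ b _ h => σ.symm.injective h)]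
    simp

lemma exists_sort_perm (r : Fin n → ℝ) :
    ∃ σ : Equiv.Perm (Fin n), ∀ i j : Fin n, i ≤ j → r (σ j) ≤ r (σ i) := by
  obtain ⟨σ, hσ⟩ : ∃ σ : Equiv.Perm (Fin n), Monotone ((fun i => -r i) ∘ σ) :=
    ⟨Tuple.sort (fun i => -r i), Tuple.monotone_sort _⟩
  exact ⟨σ, fun i j h => by have := hσ h; simpa using this⟩

lemma swapMat_isTTransform {i j : Fin n} (hij : i ≠ j) :
    IsTTransform (swapMat i j) :=
  ⟨0, ⟨le_rfl, zero_le_one⟩, i, j, hij, by simp⟩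

lemma swapMat_mulVec (i j : Fin n) (r : Fin n → ℝ) :
    (swapMat i j).mulVec r = fun a => r (Equiv.swap i j a) := by
  funext a
  unfold Matrix.mulVec swapMat dotProduct
  have : ∀ b : Fin n, (a = Equiv.swap i j b) ↔ (b = Equiv.swap i j a) := by
    intro b
    constructor
    · intro h; rw [h]; simp
    · intro h; rw [h]; simp
  simp_rw [this]
  simp

lemma ttransform_mulVec {T : Matrix (Fin n) (Fin n) ℝ} {t : ℝ} {i j : Fin n}
    (hT : T = t • (1 : Matrix (Fin n) (Fin n) ℝ) + (1 - t) • swapMat i j) (r : Fin n → ℝ) :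
    T.mulVec r = fun a => t * r a + (1 - t) * r (Equiv.swap i j a) := by
  subst hT
  rw [Matrix.add_mulVec, Matrix.smul_mulVec, Matrix.smul_mulVec,
    Matrix.one_mulVec, swapMat_mulVec]
  funext a
  simp [smul_eq_mul]

lemma sum_comp_swap (r : Fin n → ℝ) (σ : Equiv.Perm (Fin n)) (s : Finset (Fin n)) :
    ∑ a ∈ s, r (σ a) = ∑ b ∈ s.image σ, r b := by
  rw [Finset.sum_image (fun a _ b _ h => σ.injective h)]

lemma ttransform_step {T : Matrix (Fin n) (Fin n) ℝ} (hT : IsTTransform T)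
    (r : Fin n → ℝ) (hr : ProbVec r) :
    ProbVec (T.mulVec r) ∧ MajP r (T.mulVec r) := by
  obtain ⟨t, ⟨ht0, ht1⟩, i, j, hij, hTeq⟩ := hT
  rw [ttransform_mulVec hTeq]
  set σ := Equiv.swap i j
  have hsum : ∑ a, (t * r a + (1 - t) * r (σ a)) = ∑ a, r a := by
    rw [Finset.sum_add_distrib, ← Finset.mul_sum, ← Finset.mul_sum,
      Equiv.sum_comp σ r]
    ring
  constructor
  · constructor
    · intro a
      show 0 ≤ t * r a + (1 - t) * r (σ a)
      have := hr.1 a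
      have := hr.1 (σ a)
      nlinarith
    · rw [hsum, hr.2]
  · constructor
    · intro k hk
      apply topSum_le _ hk
      intro s hs
      have h1 : ∑ a ∈ s, (t * r a + (1 - t) * r (σ a))
          = t * ∑ a ∈ s, r a + (1 - t) * ∑ a ∈ s, r (σ a) := by
        rw [Finset.sum_add_distrib, ← Finset.mul_sum, ← Finset.mul_sum]
      rw [h1, sum_comp_swap]
      have h2 : ∑ a ∈ s, r a ≤ topSum r k := le_topSum r hs
      have h3 : ∑ b ∈ s.image σ, r b ≤ topSum r k :=
        le_topSum r (by rw [Finset.card_image_of_injective _ σ.injective, hs])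
      nlinarith
    · rw [topSum_univ, topSum_univ, hsum]

lemma majP_refl (p : Fin n → ℝ) : MajP p p := ⟨fun _ _ => le_rfl, rfl⟩

lemma majP_trans {p q r : Fin n → ℝ} (h1 : MajP p q) (h2 : MajP q r) : MajP p r :=
  ⟨fun k hk => le_trans (h2.1 k hk) (h1.1 k hk), h1.2.trans h2.2⟩

lemma easy_list (p : Fin n → ℝ) (hp : ProbVec p) (L : List (Matrix (Fin n) (Fin n) ℝ))
    (hL : ∀ T ∈ L, IsTTransform T) :
    ProbVec (L.prod.mulVec p) ∧ MajP p (L.prod.mulVec p) := by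
  induction L with
  | nil => simpa [Matrix.one_mulVec] using ⟨hp, majP_refl p⟩
  | cons T L ih =>
    have hL' : ∀ T' ∈ L, IsTTransform T' := fun T' h => hL T' (List.mem_cons_of_mem _ h)
    obtain ⟨hprob, hmaj⟩ := ih hL'
    have hstep := ttransform_step (hL T List.mem_cons_self) _ hprob
    rw [List.prod_cons, ← Matrix.mulVec_mulVec]
    exact ⟨hstep.1, majP_trans hmaj hstep.2⟩

lemma perm_realize (σ : Equiv.Perm (Fin n)) :
    ∃ L : List (Matrix (Fin n) (Fin n) ℝ), (∀ T ∈ L, IsTTransform T) ∧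
      ∀ r : Fin n → ℝ, L.prod.mulVec r = fun a => r (σ a) := by
  refine Equiv.Perm.swap_induction_on σ ⟨[], by simp, fun r => by simp [Matrix.one_mulVec]⟩ ?_
  intro f x y hxy ih
  · obtain ⟨L, hL, hLr⟩ := ih
    refine ⟨L ++ [swapMat x y], ?_, ?_⟩
    · intro T hT
      rcases List.mem_append.1 hT with h | h
      · exact hL T h
      · rw [List.mem_singleton.1 h]; exact swapMat_isTTransform hxy
    · intro r
      rw [List.prod_append, List.prod_singleton, ← Matrix.mulVec_mulVec,
        swapMat_mulVec, hLr]
      funext a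
      simp [Equiv.Perm.mul_apply]

lemma hard_sorted :
    ∀ d : ℕ, ∀ p q : Fin n → ℝ,
      (∀ i j : Fin n, i ≤ j → p j ≤ p i) → (∀ i j : Fin n, i ≤ j → q j ≤ q i) →
      MajP p q → ((Finset.univ.filter fun i => p i ≠ q i).card ≤ d) →
      ∃ L : List (Matrix (Fin n) (Fin n) ℝ),
        (∀ T ∈ L, IsTTransform T) ∧ q = L.prod.mulVec p := by
  intro d
  induction d with
  | zero =>
    intro p q _ _ _ hcard
    have : p = q := by
      funext i
      by_contra h
      have : i ∈ Finset.univ.filter fun i => p i ≠ q i := by simp [h]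
      have := Finset.card_pos.2 ⟨i, this⟩
      omega
    exact ⟨[], by simp, by simp [this, Matrix.one_mulVec]⟩
  | succ d IH =>
    intro p q hp hq hmaj hcard
    by_cases hpq : p = q
    · exact ⟨[], by simp, by simp [hpq, Matrix.one_mulVec]⟩
    have hS : ∑ i, p i = ∑ i, q i := by
      have := hmaj.2; rwa [topSum_univ, topSum_univ] at this
    -- existence of an index where p < q
    have hKex : ∃ i, p i < q i := by
      by_contra hc
      push_neg at hc
      apply hpq
      funext i
      have hsum0 : ∑ i, (p i - q i) = 0 := by
        rw [Finset.sum_sub_distrib, hS, sub_self]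
      have := (Finset.sum_eq_zero_iff_of_nonneg
        (fun i _ => sub_nonneg.2 (hc i))).1 hsum0 i (Finset.mem_univ i)
      linarith [sub_eq_zero.1 this]
    set A := Finset.univ.filter (fun i => p i < q i) with hA
    have hAne : A.Nonempty := by
      obtain ⟨i, hi⟩ := hKex; exact ⟨i, by simp [hA, hi]⟩
    set K := A.min' hAne with hKdef
    have hK : p K < q K := by
      have := A.min'_mem hAne
      simp [hA] at this; exact this
    have hKmin : ∀ l : Fin n, l < K → q l ≤ p l := by
      intro l hl
      by_contra hc
      push_neg at hc
      have : l ∈ A := by simp [hA, hc]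
      exact absurd (A.min'_le l this) (not_le.2 hl)
    -- existence of an index j < K with q j < p j
    have hJex : ∃ j : Fin n, j < K ∧ q j < p j := by
      by_contra hc
      push_neg at hc
      have hpre : ∀ l : Fin n, l < K → p l = q l :=
        fun l hl => le_antisymm (hc l hl) (hKmin l hl)
      have hKn : (K : ℕ) < n := K.2
      have heq : ∑ i ∈ preFin (n := n) (K : ℕ), p i = ∑ i ∈ preFin (K : ℕ), q i := by
        apply Finset.sum_congr rfl
        intro i hi
        exact hpre i (Fin.lt_def.2 (mem_preFin.1 hi))
      have hmk := hmaj.1 ((K : ℕ) + 1) hKn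
      rw [topSum_sorted p hp hKn, topSum_sorted q hq hKn,
        sum_preFin_succ p hKn, sum_preFin_succ q hKn] at hmk
      simp only [Fin.eta] at hmk
      linarith
    set B := Finset.univ.filter (fun j : Fin n => j < K ∧ q j < p j) with hB
    have hBne : B.Nonempty := by
      obtain ⟨j, hj1, hj2⟩ := hJex; exact ⟨j, by simp [hB, hj1, hj2]⟩
    set J := B.max' hBne with hJdef
    have hJmem : J < K ∧ q J < p J := by
      have h : J ∈ B := by rw [hJdef]; exact B.max'_mem hBne
      rw [hB, Finset.mem_filter] at h
      exact h.2
    have hJK : J < K := hJmem.1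
    have hJ : q J < p J := hJmem.2
    have hJneK : J ≠ K := ne_of_lt hJK
    have hmid : ∀ l : Fin n, J < l → l < K → p l = q l := by
      intro l h1 h2
      refine le_antisymm ?_ (hKmin l h2)
      by_contra hcon
      push_neg at hcon
      have : l ∈ B := by simp [hB, h2, hcon]
      exact absurd (B.le_max' l this) (not_le.2 h1)
    set δ := min (p J - q J) (q K - p K) with hδdef
    have hδ : 0 < δ := lt_min (by linarith) (by linarith)
    have hδ1 : δ ≤ p J - q J := min_le_left _ _
    have hδ2 : δ ≤ q K - p K := min_le_right _ _
    have hqJK : q K ≤ q J := hq J K hJK.le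
    have hPJK : p K < p J := by linarith
    have hne : p J - p K ≠ 0 := sub_ne_zero.2 (ne_of_gt hPJK)
    have hδle : δ ≤ p J - p K := by linarith
    set t := 1 - δ / (p J - p K) with ht
    have ht0 : 0 ≤ t := by
      rw [ht, sub_nonneg]
      exact div_le_one_of_le₀ hδle (by linarith)
    have ht1 : t ≤ 1 := by
      rw [ht]
      have : 0 ≤ δ / (p J - p K) := div_nonneg hδ.le (by linarith)
      linarith
    have h1t : 1 - t = δ / (p J - p K) := by rw [ht]; ring
    have hkey : (1 - t) * (p J - p K) = δ := by
      rw [h1t]; exact div_mul_cancel₀ δ hne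
    set T := t • (1 : Matrix (Fin n) (Fin n) ℝ) + (1 - t) • swapMat J K with hT
    set p' := T.mulVec p with hp'def
    have hp'fun : p' = fun a => t * p a + (1 - t) * p (Equiv.swap J K a) :=
      ttransform_mulVec hT p
    have hp'J : p' J = p J - δ := by
      rw [hp'fun]
      simp only [Equiv.swap_apply_left]
      linear_combination -hkey
    have hp'K : p' K = p K + δ := by
      rw [hp'fun]
      simp only [Equiv.swap_apply_right]
      linear_combination hkey
    have hp'other : ∀ a : Fin n, a ≠ J → a ≠ K → p' a = p a := by
      intro a h1 h2
      rw [hp'fun]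
      simp only [Equiv.swap_apply_of_ne_of_ne h1 h2]
      ring
    have hqJp'J : q J ≤ p' J := by rw [hp'J]; linarith
    have hp'Jle : p' J ≤ p J := by rw [hp'J]; linarith
    have hp'Kle : p' K ≤ q K := by rw [hp'K]; linarith
    have hpKle : p K ≤ p' K := by rw [hp'K]; linarith
    -- p' is sorted
    have hp'sorted : ∀ i j : Fin n, i ≤ j → p' j ≤ p' i := by
      intro a b hab
      by_cases haJ : a = J
      · subst haJ
        by_cases hbJ : b = J
        · rw [hbJ]
        by_cases hbK : b = K
        · rw [hbK]; linarith
        have hJb : J < b := lt_of_le_of_ne hab (Ne.symm hbJ)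
        rw [hp'other b hbJ hbK]
        rcases lt_trichotomy b K with h | h | h
        · have h1 := hmid b hJb h
          have h2 := hq J b hab
          linarith
        · exact absurd h hbK
        · have h3 := hp K b h.le
          linarith
      by_cases haK : a = K
      · subst haK
        by_cases hbK : b = K
        · rw [hbK]
        have hKb : K < b := lt_of_le_of_ne hab (Ne.symm hbK)
        have hbJ : b ≠ J := fun h => absurd (h ▸ hKb) (not_lt.2 hJK.le)
        rw [hp'other b hbJ hbK]
        have h4 := hp K b hab
        linarith
      · by_cases hbJ : b = J
        · rw [hbJ] at hab ⊢
          have h5 := hp a J hab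
          rw [hp'other a haJ haK]
          linarith
        by_cases hbK : b = K
        · rw [hbK] at hab ⊢
          rw [hp'other a haJ haK]
          rcases lt_trichotomy a J with h | h | h
          · have h6 := hp a J h.le
            linarith
          · exact absurd h haJ
          · have h7 := hmid a h (lt_of_le_of_ne hab haK)
            have h8 := hq a K hab
            linarith
        · rw [hp'other a haJ haK, hp'other b hbJ hbK]
          exact hp a b hab
    -- sum decomposition
    have hdiff : ∀ s : Finset (Fin n), ∑ i ∈ s, p' i =
        ∑ i ∈ s, p i + ((if J ∈ s then -δ else 0) + (if K ∈ s then δ else 0)) := by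
      intro s
      have hpt : ∀ i : Fin n, p' i =
          p i + ((if i = J then -δ else 0) + (if i = K then δ else 0)) := by
        intro i
        by_cases h1 : i = J
        · subst h1; simp [hJneK, hp'J]; ring
        by_cases h2 : i = K
        · subst h2; simp [h1, hp'K]
        · simp [h1, h2, hp'other i h1 h2]
      rw [Finset.sum_congr rfl (fun i _ => hpt i)]
      rw [Finset.sum_add_distrib, Finset.sum_add_distrib,
        Finset.sum_ite_eq' s J (fun _ => -δ), Finset.sum_ite_eq' s K (fun _ => δ)]
    have hsum' : ∑ i, p' i = ∑ i, p i := by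
      rw [hdiff Finset.univ]; simp
    -- the key prefix-sum estimate
    have hmidsum : ∀ m : ℕ, (J : ℕ) + 1 ≤ m → m ≤ (K : ℕ) →
        ∑ i ∈ preFin m, q i + δ ≤ ∑ i ∈ preFin (n := n) m, p i := by
      intro m hm1
      induction m, hm1 using Nat.le_induction with
      | base =>
        have hJn : (J : ℕ) < n := J.2
        rw [sum_preFin_succ p hJn, sum_preFin_succ q hJn]
        simp only [Fin.eta]
        have hmj := hmaj.1 (J : ℕ) (le_of_lt hJn)
        rw [topSum_sorted p hp hJn.le, topSum_sorted q hq hJn.le] at hmj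
        intro _
        linarith
      | succ m hm ihm =>
        intro hmK
        have hmn : m < n := lt_of_lt_of_le (by omega) (le_of_lt K.2)
        have hl1 : J < (⟨m, hmn⟩ : Fin n) := by
          simp only [Fin.lt_def, Fin.val_mk]; omega
        have hl2 : (⟨m, hmn⟩ : Fin n) < K := by
          simp only [Fin.lt_def, Fin.val_mk]; omega
        have := hmid ⟨m, hmn⟩ hl1 hl2
        rw [sum_preFin_succ p hmn, sum_preFin_succ q hmn]
        have := ihm (by omega)
        linarith
    -- MajP p' q
    have hmaj' : MajP p' q := by
      constructor
      · intro m hm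
        rw [topSum_sorted p' hp'sorted hm, topSum_sorted q hq hm]
        rw [hdiff (preFin m)]
        have hmaj0 := hmaj.1 m hm
        rw [topSum_sorted p hp hm, topSum_sorted q hq hm] at hmaj0
        by_cases hJm : (J : ℕ) < m
        · by_cases hKm : (K : ℕ) < m
          · rw [if_pos (mem_preFin.2 hJm), if_pos (mem_preFin.2 hKm)]
            linarith
          · have := hmidsum m (by omega) (by omega)
            rw [if_pos (mem_preFin.2 hJm), if_neg (fun hc => hKm (mem_preFin.1 hc))]
            linarith
        · have hKm : ¬ (K : ℕ) < m := by
            have := Fin.lt_def.1 hJK; omega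
          rw [if_neg (fun hc => hJm (mem_preFin.1 hc)), if_neg (fun hc => hKm (mem_preFin.1 hc))]
          linarith
      · rw [topSum_univ, topSum_univ, hsum', hS]
    -- the count decreases
    have hcase : p' J = q J ∨ p' K = q K := by
      rcases min_cases (p J - q J) (q K - p K) with ⟨h, -⟩ | ⟨h, -⟩
      · left; rw [hp'J, hδdef, h]; ring
      · right; rw [hp'K, hδdef, h]; ring
    obtain ⟨i0, hi0ne, hi0eq⟩ : ∃ i0 : Fin n, p i0 ≠ q i0 ∧ p' i0 = q i0 := by
      rcases hcase with h | h
      · exact ⟨J, ne_of_gt hJ, h⟩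
      · exact ⟨K, ne_of_lt hK, h⟩
    have hsub : (Finset.univ.filter fun i => p' i ≠ q i) ⊆
        (Finset.univ.filter fun i => p i ≠ q i).erase i0 := by
      intro i hi
      rw [Finset.mem_filter] at hi
      have hi' := hi.2
      have hiI0 : i ≠ i0 := by rintro rfl; exact hi' hi0eq
      rw [Finset.mem_erase]
      refine ⟨hiI0, Finset.mem_filter.2 ⟨Finset.mem_univ _, ?_⟩⟩
      by_cases h1 : i = J
      · rw [h1]; exact ne_of_gt hJ
      by_cases h2 : i = K
      · rw [h2]; exact ne_of_lt hK
      · rw [← hp'other i h1 h2]; exact hi'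
    have hi0mem : i0 ∈ Finset.univ.filter fun i => p i ≠ q i := by
      simp [hi0ne]
    have hcard' : (Finset.univ.filter fun i => p' i ≠ q i).card ≤ d := by
      have h1 := Finset.card_le_card hsub
      rw [Finset.card_erase_of_mem hi0mem] at h1
      omega
    obtain ⟨L', hL', hq'⟩ := IH p' q hp'sorted hq hmaj' hcard'
    refine ⟨L' ++ [T], ?_, ?_⟩
    · intro S hS'
      rcases List.mem_append.1 hS' with h | h
      · exact hL' S h
      · rw [List.mem_singleton.1 h]
        exact ⟨t, ⟨ht0, ht1⟩, J, K, hJneK, hT⟩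
    · rw [List.prod_append, List.prod_singleton, ← Matrix.mulVec_mulVec, ← hp'def]
      exact hq'

end API

/-- `p ≻ q` iff `q` is obtained from `p` by a finite composition of `T`-transforms. -/
theorem majP_iff_finite_TTransforms {n : ℕ} (p q : Fin n → ℝ)
    (hp : ProbVec p) (hq : ProbVec q) :
    MajP p q ↔ ∃ L : List (Matrix (Fin n) (Fin n) ℝ),
      (∀ T ∈ L, IsTTransform T) ∧ q = L.prod.mulVec p := by
  constructor
  · intro hmaj
    obtain ⟨σ, hσ⟩ := exists_sort_perm p
    obtain ⟨τ, hτ⟩ := exists_sort_perm q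
    have hmaj' : MajP (fun i => p (σ i)) (fun i => q (τ i)) := by
      constructor
      · intro k hk
        rw [topSum_perm p σ k, topSum_perm q τ k]
        exact hmaj.1 k hk
      · rw [topSum_perm p σ n, topSum_perm q τ n]
        exact hmaj.2
    obtain ⟨L0, hL0, hL0e⟩ := hard_sorted
      ((Finset.univ.filter fun i => p (σ i) ≠ q (τ i)).card)
      (fun i => p (σ i)) (fun i => q (τ i)) hσ hτ hmaj' le_rfl
    obtain ⟨Lσ, hLσ, hLσe⟩ := perm_realize (n := n) σ
    obtain ⟨Lτ, hLτ, hLτe⟩ := perm_realize (n := n) τ⁻¹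
    refine ⟨Lτ ++ L0 ++ Lσ, ?_, ?_⟩
    · intro T hT
      rcases List.mem_append.1 hT with h | h
      · rcases List.mem_append.1 h with h' | h'
        · exact hLτ T h'
        · exact hL0 T h'
      · exact hLσ T h
    · rw [List.prod_append, List.prod_append, ← Matrix.mulVec_mulVec,
        ← Matrix.mulVec_mulVec, hLσe p, ← hL0e, hLτe]
      funext a
      simp
  · rintro ⟨L, hL, hqe⟩
    rw [hqe]
    exact (easy_list p hp L hL).2
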